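/- The 3-quadratic families of matrices over a field K of characteristic 0 are exactly the families {A₁(a), A₂(a), A₃(a)} with a ∈ K, a ≠ 0, where A₁(a) = [[0,0,0],[0,0,a],[0,−a,0]], A₂(a) = [[0,0,−a],[0,0,0],[a,0,0]], A₃(a) = [[0,a,0],[−a,0,0],[0,0,0]]. -/
import Mathlib

open Matrix

/-- A `d`-quadratic family of matrices. -/
def IsQuadraticFamily {K : Type*} [Field K] {d : ℕ}
    (A : Fin d → Matrix (Fin d) (Fin d) K) : Prop :=
  (∀ i, (A i)ᵀ = -(A i)) ∧
  (∀ i k, A i k i = 0) ∧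
  (∀ i j : Fin d, i < j → ∀ k, A i k j = -(A j k i)) ∧
  (Matrix.of fun (k : Fin d) (p : {p : Fin d × Fin d // p.1 < p.2}) =>
      A p.val.1 k p.val.2).rank = d

noncomputable def e3 : Fin 3 ≃ {p : Fin 3 × Fin 3 // p.1 < p.2} :=
  Equiv.ofBijective ![⟨(0,1), by decide⟩, ⟨(0,2), by decide⟩, ⟨(1,2), by decide⟩]
    (by decide)

lemma rank_submatrix_col {R m n l : Type*} [CommRing R] [Fintype m] [Fintype n] [Fintype l]
    (M : Matrix m l R) (e : n ≃ l) : (M.submatrix id e).rank = M.rank := by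
  have h : (M.submatrix id e).mulVecLin = M.mulVecLin ∘ₗ LinearMap.funLeft R R e.symm := by
    ext v i
    simp only [Matrix.mulVecLin_apply, Matrix.submatrix_mulVec_equiv, LinearMap.coe_comp,
      Function.comp_apply, LinearMap.funLeft_apply]
    rfl
  rw [Matrix.rank, Matrix.rank, h, LinearMap.range_comp_of_range_eq_top]
  exact LinearMap.range_eq_top.mpr
    (LinearMap.funLeft_surjective_of_injective _ _ _ e.symm.injective)

theorem stmt_18 {K : Type*} [Field K] [CharZero K]
    (A : Fin 3 → Matrix (Fin 3) (Fin 3) K) :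
    IsQuadraticFamily A ↔
      ∃ a : K, a ≠ 0 ∧
        A 0 = !![0, 0, 0; 0, 0, a; 0, -a, 0] ∧
        A 1 = !![0, 0, -a; 0, 0, 0; a, 0, 0] ∧
        A 2 = !![0, a, 0; -a, 0, 0; 0, 0, 0] := by
  constructor
  · rintro ⟨hsk, hcol, hcross, hrank⟩
    have hske : ∀ i j k, A i j k = -(A i k j) := by
      intro i j k
      have := congrFun (congrFun (hsk i) k) j
      simpa using this
    have hdiag : ∀ i k, A i k k = 0 := by
      intro i k
      have h := hske i k k
      have h2 : (2 : K) * A i k k = 0 := by linear_combination h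
      exact (mul_eq_zero.mp h2).resolve_left two_ne_zero
    set a := A 0 1 2 with ha
    have h021 : A 0 2 1 = -a := hske 0 2 1
    have h120 : A 1 2 0 = a := by
      have h := hcross 0 1 (by decide) 2
      rw [h021] at h
      exact (neg_inj.mp h).symm
    have h102 : A 1 0 2 = -a := by
      have := hske 1 0 2
      rw [this, h120]
    have h210 : A 2 1 0 = -a := by
      have h := hcross 0 2 (by decide) 1
      rw [← ha] at h
      exact neg_eq_iff_eq_neg.mp h.symm
    have h201 : A 2 0 1 = a := by
      have := hske 2 0 1
      rw [this, h210, neg_neg]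
    have hrow : ∀ i k, A i i k = 0 := by
      intro i k
      rw [hske i i k, hcol i k, neg_zero]
    have hA0 : A 0 = !![0, 0, 0; 0, 0, a; 0, -a, 0] := by
      ext k j
      fin_cases k <;> fin_cases j <;>
        simp [hcol 0, hdiag 0, hrow 0, h021, ha, Matrix.vecHead, Matrix.vecTail]
    have hA1 : A 1 = !![0, 0, -a; 0, 0, 0; a, 0, 0] := by
      ext k j
      fin_cases k <;> fin_cases j <;>
        simp [hcol 1, hdiag 1, hrow 1, h120, h102, Matrix.vecHead, Matrix.vecTail]
    have hA2 : A 2 = !![0, a, 0; -a, 0, 0; 0, 0, 0] := by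
      ext k j
      fin_cases k <;> fin_cases j <;>
        simp [hcol 2, hdiag 2, hrow 2, h210, h201, Matrix.vecHead, Matrix.vecTail]
    refine ⟨a, ?_, hA0, hA1, hA2⟩
    intro h0
    rw [h0] at hA0 hA1 hA2
    have hval : ∀ i : Fin 3, i = 0 ∨ i = 1 ∨ i = 2 := by decide
    have hAz : ∀ i : Fin 3, A i = 0 := by
      intro i
      rcases hval i with rfl | rfl | rfl <;>
        [rw [hA0]; rw [hA1]; rw [hA2]] <;>
        · ext x y
          fin_cases x <;> fin_cases y <;> simp [Matrix.vecHead, Matrix.vecTail]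
    have hzero : (Matrix.of fun (k : Fin 3) (p : {p : Fin 3 × Fin 3 // p.1 < p.2}) =>
        A p.val.1 k p.val.2) = 0 := by
      ext k p
      simp [hAz p.val.1]
    rw [hzero] at hrank
    simp [Matrix.rank_zero] at hrank
  · rintro ⟨a, ha, hA0, hA1, hA2⟩
    have hval : ∀ i : Fin 3, i = 0 ∨ i = 1 ∨ i = 2 := by decide
    refine ⟨?_, ?_, ?_, ?_⟩
    · intro i
      rcases hval i with rfl | rfl | rfl <;>
        [rw [hA0]; rw [hA1]; rw [hA2]] <;>
        · ext k j
          fin_cases k <;> fin_cases j <;> simp [Matrix.vecHead, Matrix.vecTail]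
    · intro i k
      rcases hval i with rfl | rfl | rfl <;> rcases hval k with rfl | rfl | rfl <;>
        simp [hA0, hA1, hA2, Matrix.vecHead, Matrix.vecTail]
    · intro i j hij k
      rcases hval i with rfl | rfl | rfl <;> rcases hval j with rfl | rfl | rfl <;>
        first
        | exact absurd hij (by decide)
        | (rcases hval k with rfl | rfl | rfl <;>
            simp [hA0, hA1, hA2, Matrix.vecHead, Matrix.vecTail])
    · set B := (Matrix.of fun (k : Fin 3) (p : {p : Fin 3 × Fin 3 // p.1 < p.2}) =>
        A p.val.1 k p.val.2) with hB
      have hM : B.submatrix id e3 = !![0, 0, -a; 0, a, 0; -a, 0, 0] := by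
        ext k i
        fin_cases k <;> fin_cases i <;>
          simp [hB, Matrix.submatrix_apply, e3, Equiv.ofBijective, hA0, hA1, hA2,
            Matrix.vecHead, Matrix.vecTail]
      have hrk := rank_submatrix_col B e3
      rw [hM] at hrk
      rw [← hrk]
      have hd : (!![0, 0, -a; 0, a, 0; -a, 0, 0] : Matrix (Fin 3) (Fin 3) K).det
          = -(a * a * a) := by
        rw [Matrix.det_fin_three]
        simp [Matrix.vecHead, Matrix.vecTail]
      have hdet : (!![0, 0, -a; 0, a, 0; -a, 0, 0] : Matrix (Fin 3) (Fin 3) K).det ≠ 0 := by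
        rw [hd]
        exact neg_ne_zero.mpr (mul_ne_zero (mul_ne_zero ha ha) ha)
      have hU : IsUnit (!![0, 0, -a; 0, a, 0; -a, 0, 0] : Matrix (Fin 3) (Fin 3) K) := by
        rw [Matrix.isUnit_iff_isUnit_det]
        exact isUnit_iff_ne_zero.mpr hdet
      rw [Matrix.rank_of_isUnit _ hU]
      simp
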